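/- The Euler allocation of IMCC with stress-scaling adjustment is a full allocation (Proposition 3.13, Euler case): Let N be a positive integer and for each i ∈ Fin 6 and j ∈ Fin 5 let g^{FC}_{ij}, g^{RS}_{ij}, g^{RC}_{ij} : (Fin N → ℝ) → ℝ be positively homogeneous of degree 1 and Fréchet differentiable at the all-ones vector 𝟙. For • ∈ {FC, RS, RC} set ES^•(i) = sqrt(∑_{j ∈ Fin 5} g^•_{ij}(𝟙)²) and A^•_n(i,j) = (g^•_{ij}(𝟙)/ES^•(i)) · (fderiv ℝ g^•_{ij} 𝟙)(e_n), and assume ES^{FC}(i) ≠ 0, ES^{RS}(i) ≠ 0 and ES^{RC}(i) ≠ 0 for every i. Define IMCC^{E,S}_n(i,j) = 0.5 · [ (ES^{RS}(i)/ES^{RC}(i)) · A^{FC}_n(i,j) + (ES^{FC}(i)/ES^{RC}(i)) · A^{RS}_n(i,j) − (ES^{RS}(i)·ES^{FC}(i)/ES^{RC}(i)²) · A^{RC}_n(i,j) ]. Then ∑_{n ∈ Fin N} ∑_{i ∈ Fin 6} ∑_{j ∈ Fin 5} IMCC^{E,S}_n(i,j) = 0.5 · ∑_{i ∈ Fin 6}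 (ES^{RS}(i)/ES^{RC}(i)) · ES^{FC}(i). -/

import Mathlib

lemma euler_hom_fderiv {N : ℕ} (g : (Fin N → ℝ) → ℝ)
    (hhom : ∀ (a : ℝ), 0 ≤ a → ∀ v : Fin N → ℝ, g (a • v) = a * g v)
    (hd : DifferentiableAt ℝ g (1 : Fin N → ℝ)) :
    (fderiv ℝ g (1 : Fin N → ℝ)) (1 : Fin N → ℝ) = g 1 := by
  have hc : HasDerivAt (fun t : ℝ => t • (1 : Fin N → ℝ)) (1 : Fin N → ℝ) 1 := by
    simpa using (hasDerivAt_id (1 : ℝ)).smul_const (1 : Fin N → ℝ)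
  have hfd : HasFDerivAt g (fderiv ℝ g 1) ((1 : ℝ) • (1 : Fin N → ℝ)) := by
    simpa using hd.hasFDerivAt
  have h1 : HasDerivAt (fun t : ℝ => g (t • (1 : Fin N → ℝ)))
      ((fderiv ℝ g (1 : Fin N → ℝ)) (1 : Fin N → ℝ)) 1 := by
    exact hfd.comp_hasDerivAt (1 : ℝ) hc
  have h2 : HasDerivAt (fun t : ℝ => t * g 1) (g 1) 1 := by
    simpa using (hasDerivAt_id (1 : ℝ)).mul_const (g 1)
  have heq : (fun t : ℝ => g (t • (1 : Fin N → ℝ))) =ᶠ[nhds (1 : ℝ)] fun t => t * g 1 := by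
    filter_upwards [eventually_gt_nhds (by norm_num : (0:ℝ) < 1)] with t ht
    exact hhom t ht.le 1
  exact ((h2.congr_of_eventuallyEq heq).unique h1).symm

lemma sum_fderiv_single {N : ℕ} (g : (Fin N → ℝ) → ℝ)
    (hhom : ∀ (a : ℝ), 0 ≤ a → ∀ v : Fin N → ℝ, g (a • v) = a * g v)
    (hd : DifferentiableAt ℝ g (1 : Fin N → ℝ)) :
    ∑ n : Fin N, (fderiv ℝ g (1 : Fin N → ℝ)) (Pi.single n 1) = g 1 := by
  rw [← map_sum]
  have h : (∑ n : Fin N, Pi.single n (1:ℝ)) = (1 : Fin N → ℝ) := by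
    funext m
    simp [Finset.sum_apply, Pi.single_apply]
  rw [h, euler_hom_fderiv g hhom hd]

/-- The Euler allocation of IMCC with stress-scaling adjustment is a full
allocation (Proposition 3.13, Euler case). -/
theorem euler_allocation_scaling_full {N : ℕ} (hN : 0 < N)
    (gFC gRS gRC : Fin 6 → Fin 5 → (Fin N → ℝ) → ℝ)
    (hhomFC : ∀ i j, ∀ (a : ℝ), 0 ≤ a → ∀ v : Fin N → ℝ, gFC i j (a • v) = a * gFC i j v)
    (hhomRS : ∀ i j, ∀ (a : ℝ), 0 ≤ a → ∀ v : Fin N → ℝ, gRS i j (a • v) = a * gRS i j v)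
    (hhomRC : ∀ i j, ∀ (a : ℝ), 0 ≤ a → ∀ v : Fin N → ℝ, gRC i j (a • v) = a * gRC i j v)
    (hdiffFC : ∀ i j, DifferentiableAt ℝ (gFC i j) (1 : Fin N → ℝ))
    (hdiffRS : ∀ i j, DifferentiableAt ℝ (gRS i j) (1 : Fin N → ℝ))
    (hdiffRC : ∀ i j, DifferentiableAt ℝ (gRC i j) (1 : Fin N → ℝ))
    (ESFC ESRS ESRC : Fin 6 → ℝ)
    (hESFC : ∀ i, ESFC i = Real.sqrt (∑ j, (gFC i j (1 : Fin N → ℝ)) ^ 2))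
    (hESRS : ∀ i, ESRS i = Real.sqrt (∑ j, (gRS i j (1 : Fin N → ℝ)) ^ 2))
    (hESRC : ∀ i, ESRC i = Real.sqrt (∑ j, (gRC i j (1 : Fin N → ℝ)) ^ 2))
    (hneFC : ∀ i, ESFC i ≠ 0) (hneRS : ∀ i, ESRS i ≠ 0) (hneRC : ∀ i, ESRC i ≠ 0) :
    ∑ n : Fin N, ∑ i : Fin 6, ∑ j : Fin 5,
        0.5 * ((ESRS i / ESRC i)
            * ((gFC i j (1 : Fin N → ℝ) / ESFC i)
              * (fderiv ℝ (gFC i j) (1 : Fin N → ℝ)) (Pi.single n 1))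
          + (ESFC i / ESRC i)
            * ((gRS i j (1 : Fin N → ℝ) / ESRS i)
              * (fderiv ℝ (gRS i j) (1 : Fin N → ℝ)) (Pi.single n 1))
          - (ESRS i * ESFC i / (ESRC i) ^ 2)
            * ((gRC i j (1 : Fin N → ℝ) / ESRC i)
              * (fderiv ℝ (gRC i j) (1 : Fin N → ℝ)) (Pi.single n 1)))
      = 0.5 * ∑ i : Fin 6, (ESRS i / ESRC i) * ESFC i := by
  -- square identities
  have sqFC : ∀ i, ∑ j, (gFC i j (1 : Fin N → ℝ)) ^ 2 = ESFC i ^ 2 := by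
    intro i
    rw [hESFC i, Real.sq_sqrt]
    exact Finset.sum_nonneg fun j _ => sq_nonneg _
  have sqRS : ∀ i, ∑ j, (gRS i j (1 : Fin N → ℝ)) ^ 2 = ESRS i ^ 2 := by
    intro i
    rw [hESRS i, Real.sq_sqrt]
    exact Finset.sum_nonneg fun j _ => sq_nonneg _
  have sqRC : ∀ i, ∑ j, (gRC i j (1 : Fin N → ℝ)) ^ 2 = ESRC i ^ 2 := by
    intro i
    rw [hESRC i, Real.sq_sqrt]
    exact Finset.sum_nonneg fun j _ => sq_nonneg _
  rw [Finset.sum_comm]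
  rw [Finset.mul_sum]
  refine Finset.sum_congr rfl fun i _ => ?_
  rw [Finset.sum_comm]
  have key : ∀ (g : Fin 5 → (Fin N → ℝ) → ℝ)
      (hh : ∀ j, ∀ (a : ℝ), 0 ≤ a → ∀ v : Fin N → ℝ, g j (a • v) = a * g j v)
      (hd : ∀ j, DifferentiableAt ℝ (g j) (1 : Fin N → ℝ)) (c : Fin 5 → ℝ),
      ∑ j : Fin 5, ∑ n : Fin N, c j * (fderiv ℝ (g j) (1 : Fin N → ℝ)) (Pi.single n 1)
        = ∑ j : Fin 5, c j * g j 1 := by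
    intro g hh hd c
    refine Finset.sum_congr rfl fun j _ => ?_
    rw [← Finset.mul_sum, sum_fderiv_single (g j) (hh j) (hd j)]
  have expand : ∑ j : Fin 5, ∑ n : Fin N,
      (0.5 * ((ESRS i / ESRC i)
            * ((gFC i j (1 : Fin N → ℝ) / ESFC i)
              * (fderiv ℝ (gFC i j) (1 : Fin N → ℝ)) (Pi.single n 1))
          + (ESFC i / ESRC i)
            * ((gRS i j (1 : Fin N → ℝ) / ESRS i)
              * (fderiv ℝ (gRS i j) (1 : Fin N → ℝ)) (Pi.single n 1))
          - (ESRS i * ESFC i / (ESRC i) ^ 2)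
            * ((gRC i j (1 : Fin N → ℝ) / ESRC i)
              * (fderiv ℝ (gRC i j) (1 : Fin N → ℝ)) (Pi.single n 1))))
      = ∑ j : Fin 5, ∑ n : Fin N,
          ((0.5 * (ESRS i / ESRC i) * (gFC i j (1 : Fin N → ℝ) / ESFC i))
              * (fderiv ℝ (gFC i j) (1 : Fin N → ℝ)) (Pi.single n 1))
        + ∑ j : Fin 5, ∑ n : Fin N,
          ((0.5 * (ESFC i / ESRC i) * (gRS i j (1 : Fin N → ℝ) / ESRS i))
              * (fderiv ℝ (gRS i j) (1 : Fin N → ℝ)) (Pi.single n 1))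
        - ∑ j : Fin 5, ∑ n : Fin N,
          ((0.5 * (ESRS i * ESFC i / (ESRC i) ^ 2) * (gRC i j (1 : Fin N → ℝ) / ESRC i))
              * (fderiv ℝ (gRC i j) (1 : Fin N → ℝ)) (Pi.single n 1)) := by
    rw [← Finset.sum_add_distrib, ← Finset.sum_sub_distrib]
    refine Finset.sum_congr rfl fun j _ => ?_
    rw [← Finset.sum_add_distrib, ← Finset.sum_sub_distrib]
    refine Finset.sum_congr rfl fun n _ => ?_
    ring
  rw [expand,
    key _ (fun j => hhomFC i j) (fun j => hdiffFC i j) _,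
    key _ (fun j => hhomRS i j) (fun j => hdiffRS i j) _,
    key _ (fun j => hhomRC i j) (fun j => hdiffRC i j) _]
  have e1 : ∑ j : Fin 5, (0.5 * (ESRS i / ESRC i) * (gFC i j (1 : Fin N → ℝ) / ESFC i))
      * gFC i j 1 = 0.5 * (ESRS i / ESRC i) * (ESFC i ^ 2 / ESFC i) := by
    have : ∑ j : Fin 5, (0.5 * (ESRS i / ESRC i) * (gFC i j (1 : Fin N → ℝ) / ESFC i))
        * gFC i j 1 = (0.5 * (ESRS i / ESRC i) / ESFC i) * ∑ j, (gFC i j (1 : Fin N → ℝ)) ^ 2 := by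
      rw [Finset.mul_sum]; exact Finset.sum_congr rfl fun j _ => by ring
    rw [this, sqFC i]; ring
  have e2 : ∑ j : Fin 5, (0.5 * (ESFC i / ESRC i) * (gRS i j (1 : Fin N → ℝ) / ESRS i))
      * gRS i j 1 = 0.5 * (ESFC i / ESRC i) * (ESRS i ^ 2 / ESRS i) := by
    have : ∑ j : Fin 5, (0.5 * (ESFC i / ESRC i) * (gRS i j (1 : Fin N → ℝ) / ESRS i))
        * gRS i j 1 = (0.5 * (ESFC i / ESRC i) / ESRS i) * ∑ j, (gRS i j (1 : Fin N → ℝ)) ^ 2 := by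
      rw [Finset.mul_sum]; exact Finset.sum_congr rfl fun j _ => by ring
    rw [this, sqRS i]; ring
  have e3 : ∑ j : Fin 5, (0.5 * (ESRS i * ESFC i / (ESRC i) ^ 2) * (gRC i j (1 : Fin N → ℝ) / ESRC i))
      * gRC i j 1 = 0.5 * (ESRS i * ESFC i / (ESRC i) ^ 2) * (ESRC i ^ 2 / ESRC i) := by
    have : ∑ j : Fin 5, (0.5 * (ESRS i * ESFC i / (ESRC i) ^ 2) * (gRC i j (1 : Fin N → ℝ) / ESRC i))
        * gRC i j 1 = (0.5 * (ESRS i * ESFC i / (ESRC i) ^ 2) / ESRC i)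
          * ∑ j, (gRC i j (1 : Fin N → ℝ)) ^ 2 := by
      rw [Finset.mul_sum]; exact Finset.sum_congr rfl fun j _ => by ring
    rw [this, sqRC i]; ring
  rw [e1, e2, e3]
  field_simp [hneFC i, hneRS i, hneRC i]
  ring
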